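/- Let Δx > 0, x_{i±1} = x_i ± Δx, and let q be the unique polynomial of degree at most 4 satisfying q(x_{i−1}) = u_{i−1}, q(x_i) = u_i, q(x_{i+1}) = u_{i+1}, q'(x_{i−1}) = v_{i−1}, q'(x_{i+1}) = v_{i+1}. Then q'(x_i) = (3/(4Δx))(u_{i+1} − u_{i−1}) − (1/4)(v_{i−1} + v_{i+1}). -/

import Mathlib

theorem stmt_7 (Δx xi uim1 ui uip1 vim1 vip1 : ℝ) (hΔ : 0 < Δx)
    (q : Polynomial ℝ) (hdeg : q.natDegree ≤ 4)
    (h1 : q.eval (xi - Δx) = uim1) (h2 : q.eval xi = ui) (h3 : q.eval (xi + Δx) = uip1)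
    (h4 : (Polynomial.derivative q).eval (xi - Δx) = vim1)
    (h5 : (Polynomial.derivative q).eval (xi + Δx) = vip1) :
    (Polynomial.derivative q).eval xi
      = (3 / (4 * Δx)) * (uip1 - uim1) - (1 / 4) * (vim1 + vip1) := by
  have heval : ∀ x : ℝ, q.eval x = ∑ i ∈ Finset.range 5, q.coeff i * x ^ i := fun x =>
    Polynomial.eval_eq_sum_range' (lt_of_le_of_lt hdeg (by norm_num)) x
  have hdd : (Polynomial.derivative q).natDegree < 5 :=
    lt_of_le_of_lt (le_trans (Polynomial.natDegree_derivative_le q) (Nat.sub_le_sub_right hdeg 1)) (by norm_num)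
  have hderiv : ∀ x : ℝ, (Polynomial.derivative q).eval x =
      ∑ i ∈ Finset.range 5, (Polynomial.derivative q).coeff i * x ^ i := fun x =>
    Polynomial.eval_eq_sum_range' hdd x
  have hc5 : q.coeff 5 = 0 := Polynomial.coeff_eq_zero_of_natDegree_lt (by omega)
  rw [heval] at h1 h3
  rw [hderiv] at h4 h5 ⊢
  simp only [Finset.sum_range_succ, Finset.sum_range_zero, Polynomial.coeff_derivative] at h1 h3 h4 h5 ⊢
  rw [hc5] at h4 h5 ⊢
  have hne : Δx ≠ 0 := ne_of_gt hΔ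
  field_simp
  push_cast at h1 h3 h4 h5 ⊢
  linear_combination 3 * h3 - 3 * h1 - Δx * h4 - Δx * h5
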